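/- arXiv:1912.00452 — 3 statements merged into one kernel-verified Lean document; each statement's English description precedes it below -/
import Mathlib

section
/- Let f and g be formal power series over a commutative ring R. Then for every m ∈ ℕ, the coefficient of x^m in f·g equals Σ_{j=0}^{m} Σ_{k=0}^{m−j} T_{m−j,k} · σ_k · δ_j[k] · f_j*[k] · g_j*[k], where T_{n,k} = 1 if (n−k) AND k = 0 and T_{n,k} = 0 otherwise, δ_j[k] = 1 if j AND k = 0 and 0 otherwise, and f_j* denotes the inverse binomial modulo 2 transform of the shifted series f_j. -/
/-- The signed Thue–Morse sequence: `σ n = (-1)^(Hamming weight of n)`. -/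
noncomputable def sgn (R : Type*) [CommRing R] (n : ℕ) : R := (-1) ^ (Nat.digits 2 n).sum

/-- `f_k`: the power series `f` shifted by `k`, i.e. `Σ_{n≥0} f[k+n] x^n`. -/
noncomputable def shiftS {R : Type*} [CommRing R] (k : ℕ) (f : PowerSeries R) : PowerSeries R :=
  PowerSeries.mk fun n => PowerSeries.coeff (k + n) f

/-- The inverse binomial modulo 2 transform:
`f*[n] = Σ_{0≤k≤n, (n-k) AND k = 0} σ_{n-k}·f[k]`. -/
noncomputable def bmtInv {R : Type*} [CommRing R] (f : PowerSeries R) : PowerSeries R :=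
  PowerSeries.mk fun n => ∑ k ∈ Finset.range (n + 1),
    if (n - k) &&& k = 0 then sgn R (n - k) * PowerSeries.coeff k f else 0

section BitToolkit

/-- testBit extensionality as an iff. -/
lemma tb_ext_iff {a b : ℕ} : a = b ↔ ∀ p, a.testBit p = b.testBit p :=
  ⟨fun h p => by rw [h], Nat.eq_of_testBit_eq⟩

lemma and_eq_left_iff {a b : ℕ} :
    a &&& b = a ↔ ∀ p, (a.testBit p && b.testBit p) = a.testBit p := by
  rw [tb_ext_iff]; simp [Nat.testBit_and]

lemma and_eq_zero_iff' {a b : ℕ} :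
    a &&& b = 0 ↔ ∀ p, (a.testBit p && b.testBit p) = false := by
  rw [tb_ext_iff]; simp [Nat.testBit_and]

lemma sub_le_of_and_eq_left {a b : ℕ} (h : a &&& b = a) : a ≤ b :=
  h ▸ Nat.and_le_right

end BitToolkit

section SgnLemmas

variable {R : Type*} [CommRing R]

lemma sgn_zero : sgn R 0 = 1 := by simp [sgn]

lemma sgn_rec (n : ℕ) : sgn R n = (-1) ^ (n % 2) * sgn R (n / 2) := by
  rcases eq_or_ne n 0 with rfl | hn
  · simp [sgn]
  · rw [sgn, sgn, Nat.digits_def' (by norm_num : 1 < 2) (Nat.pos_of_ne_zero hn),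
      List.sum_cons, pow_add]

lemma neg_one_pow_mod_two (n : ℕ) : ((-1 : R)) ^ (n % 2) = (-1) ^ n := by
  conv_rhs => rw [← Nat.div_add_mod n 2, pow_add, pow_mul]
  norm_num

lemma sgn_xor (a b : ℕ) : sgn R (a ^^^ b) = sgn R a * sgn R b := by
  induction a using Nat.strong_induction_on generalizing b with
  | _ a ih =>
    rcases eq_or_ne a 0 with rfl | ha
    · simp [sgn_zero]
    · have h2 : a / 2 < a := Nat.div_lt_self (Nat.pos_of_ne_zero ha) one_lt_two
      rw [sgn_rec (a ^^^ b), Nat.xor_div_two, ih _ h2, sgn_rec a, sgn_rec b]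
      have hmod : ((-1 : R)) ^ ((a ^^^ b) % 2) = (-1) ^ (a % 2) * (-1) ^ (b % 2) := by
        rw [Nat.xor_mod_two_eq, neg_one_pow_mod_two, pow_add, ← neg_one_pow_mod_two a,
          ← neg_one_pow_mod_two b]
      rw [hmod]; ring

lemma sgn_sq (n : ℕ) : sgn R n * sgn R n = 1 := by
  rw [← sgn_xor, Nat.xor_self, sgn_zero]

end SgnLemmas

section AddXor

/-- Disjoint addition is xor. -/
lemma add_eq_xor_of_and_eq_zero : ∀ a : ℕ, ∀ b : ℕ, a &&& b = 0 → a + b = a ^^^ b := by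
  intro a
  induction a using Nat.strong_induction_on with
  | _ a ih =>
    intro b hab
    rcases eq_or_ne a 0 with rfl | ha
    · simp
    · have h2 : a / 2 < a := Nat.div_lt_self (Nat.pos_of_ne_zero ha) one_lt_two
      have hd : a / 2 &&& b / 2 = 0 := by rw [← Nat.and_div_two, hab]
      have ihe := ih _ h2 _ hd
      have hm : ¬(a % 2 = 1 ∧ b % 2 = 1) := by
        intro ⟨h1, h2'⟩
        have := Nat.and_mod_two_eq_one.mpr ⟨h1, h2'⟩
        rw [hab] at this; simp at this
      have hx2 : (a ^^^ b) / 2 = a / 2 ^^^ b / 2 := Nat.xor_div_two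
      have hxm : (a ^^^ b) % 2 = (a + b) % 2 := Nat.xor_mod_two_eq
      have ha2 := Nat.mod_two_eq_zero_or_one a
      have hb2 := Nat.mod_two_eq_zero_or_one b
      omega

lemma or_eq_xor_of_and_eq_zero {a b : ℕ} (h : a &&& b = 0) : a ||| b = a ^^^ b := by
  have hp := and_eq_zero_iff'.mp h
  rw [tb_ext_iff]
  intro p
  have := hp p
  simp only [Nat.testBit_or, Nat.testBit_xor]
  cases ha : a.testBit p <;> cases hb : b.testBit p <;> simp_all

lemma add_eq_or_of_and_eq_zero {a b : ℕ} (h : a &&& b = 0) : a + b = a ||| b := by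
  rw [add_eq_xor_of_and_eq_zero a b h, or_eq_xor_of_and_eq_zero h]

/-- a + b = (a ||| b) + (a &&& b) -/
lemma add_eq_or_add_and : ∀ a : ℕ, ∀ b : ℕ, a + b = (a ||| b) + (a &&& b) := by
  intro a
  induction a using Nat.strong_induction_on with
  | _ a ih =>
    intro b
    rcases eq_or_ne a 0 with rfl | ha
    · simp
    · have h2 : a / 2 < a := Nat.div_lt_self (Nat.pos_of_ne_zero ha) one_lt_two
      have ihe := ih _ h2 (b / 2)
      have hod : (a ||| b) / 2 = a / 2 ||| b / 2 := Nat.or_div_two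
      have had : (a &&& b) / 2 = a / 2 &&& b / 2 := Nat.and_div_two
      have hom : (a ||| b) % 2 = 1 ↔ (a % 2 = 1 ∨ b % 2 = 1) := Nat.or_mod_two_eq_one
      have ham : (a &&& b) % 2 = 1 ↔ (a % 2 = 1 ∧ b % 2 = 1) := Nat.and_mod_two_eq_one
      have ha2 := Nat.mod_two_eq_zero_or_one a
      have hb2 := Nat.mod_two_eq_zero_or_one b
      have ho2 := Nat.mod_two_eq_zero_or_one (a ||| b)
      have hn2 := Nat.mod_two_eq_zero_or_one (a &&& b)
      omega

end AddXor

section Submask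

lemma xor_and_self_right {a j : ℕ} (h : j &&& a = j) : (a ^^^ j) &&& j = 0 := by
  have hp := and_eq_left_iff.mp h
  rw [and_eq_zero_iff']
  intro p
  have := hp p
  cases ha : a.testBit p <;> cases hj : j.testBit p <;> simp_all [Nat.testBit_xor]

/-- If `j` is a submask of `a` then `a - j = a ^^^ j`. -/
lemma sub_eq_xor_of_submask {a j : ℕ} (h : j &&& a = j) : a - j = a ^^^ j := by
  have h0 : (a ^^^ j) &&& j = 0 := xor_and_self_right h
  have : (a ^^^ j) + j = a := by
    rw [add_eq_xor_of_and_eq_zero _ _ h0, Nat.xor_xor_cancel_right]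
  omega

lemma submask_le {a j : ℕ} (h : j &&& a = j) : j ≤ a := sub_le_of_and_eq_left h

/-- For `k ≤ n`: `(n - k) &&& k = 0 ↔ k &&& n = k`. -/
lemma sub_and_eq_zero_iff {n k : ℕ} (hk : k ≤ n) : (n - k) &&& k = 0 ↔ k &&& n = k := by
  constructor
  · intro h
    have hadd : (n - k) + k = n := Nat.sub_add_cancel hk
    have hx : (n - k) + k = (n - k) ^^^ k := add_eq_xor_of_and_eq_zero _ _ h
    rw [and_eq_left_iff]
    intro p
    have h0 := and_eq_zero_iff'.mp h p
    have hn : n.testBit p = ((n - k).testBit p ^^ k.testBit p) := by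
      rw [← Nat.testBit_xor, ← hx, hadd]
    rw [hn]
    cases hnk : (n - k).testBit p <;> cases hkk : k.testBit p <;> simp_all
  · intro h
    rw [sub_eq_xor_of_submask h]
    have := xor_and_self_right h
    exact this

lemma submask_antisymm {a b : ℕ} (h1 : a &&& b = a) (h2 : b &&& a = b) : a = b := by
  rw [← h1, Nat.land_comm, h2]

lemma sgn_sub_submask {R : Type*} [CommRing R] {k i : ℕ} (h : i &&& k = i) :
    sgn R (k - i) = sgn R k * sgn R i := by
  rw [sub_eq_xor_of_submask h, sgn_xor]

end Submask

section AltSum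

variable {R : Type*} [CommRing R]

lemma exists_diff_bit {S T : ℕ} (hST : S &&& T = S) (hne : S ≠ T) :
    ∃ p, T.testBit p = true ∧ S.testBit p = false := by
  by_contra hcon
  push_neg at hcon
  apply hne
  apply Nat.eq_of_testBit_eq
  intro p
  have h1 := and_eq_left_iff.mp hST p
  cases hS : S.testBit p <;> cases hT : T.testBit p <;> simp_all

lemma sgn_xor_two_pow {p j : ℕ} : sgn R (j ^^^ 2 ^ p) = - sgn R j := by
  rw [sgn_xor]
  have h2 : sgn R (2 ^ p) = -1 := by
    unfold sgn
    induction p with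
    | zero => simp
    | succ q ih =>
      have : Nat.digits 2 (2 ^ (q + 1)) = 2 ^ (q+1) % 2 :: Nat.digits 2 (2 ^ (q+1) / 2) :=
        Nat.digits_def' (by norm_num) (Nat.pow_pos (by norm_num))
      rw [this]
      have h1 : 2 ^ (q+1) % 2 = 0 := by
        simp [Nat.pow_succ, Nat.mul_mod_left]
      have h2 : 2 ^ (q+1) / 2 = 2 ^ q := by
        rw [Nat.pow_succ]; omega
      rw [h1, h2, List.sum_cons]
      simpa using ih
  rw [h2]; ring

/-- Key alternating-sum lemma: summing `sgn` over the submask interval `[S, T]`. -/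
lemma altsum (N S T : ℕ) (hTN : T ≤ N) :
    ∑ j ∈ Finset.range (N + 1), (if S &&& j = S ∧ j &&& T = j then sgn R j else 0)
      = if S = T then sgn R T else 0 := by
  by_cases hST : S = T
  · subst hST
    rw [if_pos rfl]
    rw [Finset.sum_eq_single S]
    · rw [if_pos ⟨Nat.and_self S, Nat.and_self S⟩]
    · intro j _ hj
      rw [if_neg]
      rintro ⟨h1, h2⟩
      exact hj (submask_antisymm h2 h1)
    · intro hS
      exact absurd (Finset.mem_range.mpr (Nat.lt_succ_of_le (le_trans (by
        exact le_refl S) hTN))) hS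
  · rw [if_neg hST]
    by_cases hsub : S &&& T = S
    · obtain ⟨p, hTp, hSp⟩ := exists_diff_bit hsub hST
      have hS2p : S &&& 2 ^ p = 0 := by
        rw [Nat.and_two_pow, hSp]; simp
      have hT2p : 2 ^ p &&& T = 2 ^ p := by
        rw [Nat.land_comm, Nat.and_two_pow, hTp]; simp
      have hcondpres : ∀ j, (S &&& j = S ∧ j &&& T = j) →
          (S &&& (j ^^^ 2 ^ p) = S ∧ (j ^^^ 2 ^ p) &&& T = j ^^^ 2 ^ p) := by
        rintro j ⟨h1, h2⟩
        constructor
        · rw [Nat.and_xor_distrib_left, h1, hS2p, Nat.xor_zero]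
        · rw [Nat.and_xor_distrib_right, h2, hT2p]
      apply Finset.sum_involution
        (g := fun j _ => if S &&& j = S ∧ j &&& T = j then j ^^^ 2 ^ p else j)
      case _ =>
        intro j _
        by_cases hc : S &&& j = S ∧ j &&& T = j
        · simp only [if_pos hc]
          rw [if_pos (hcondpres j hc), sgn_xor_two_pow]
          ring
        · simp only [if_neg hc]
          rw [add_zero]
      case _ =>
        intro j _ hfj
        have hc : S &&& j = S ∧ j &&& T = j := by
          by_contra hc
          exact hfj (if_neg hc)
        rw [if_pos hc]
        intro heq
        have h0 : j ^^^ 2 ^ p = j ^^^ 0 := by simpa using heq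
        have h1 := Nat.xor_right_injective h0
        simp at h1
      case _ =>
        intro j hj
        by_cases hc : S &&& j = S ∧ j &&& T = j
        · rw [if_pos hc]
          have := (hcondpres j hc).2
          exact Finset.mem_range.mpr (Nat.lt_succ_of_le (le_trans (submask_le this) hTN))
        · rwa [if_neg hc]
      case _ =>
        intro j hj
        by_cases hc : S &&& j = S ∧ j &&& T = j
        · rw [if_pos hc, if_pos (hcondpres j hc), Nat.xor_xor_cancel_right]
        · rw [if_neg hc, if_neg hc]
    · apply Finset.sum_eq_zero
      intro j _
      rw [if_neg]
      rintro ⟨h1, h2⟩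
      apply hsub
      conv_lhs => rw [← h1]
      rw [Nat.land_assoc, h2, h1]

end AltSum

section BitIdentities

lemma X1 (q j : ℕ) : (q ^^^ (q &&& j)) &&& j = 0 := by
  rw [and_eq_zero_iff']
  intro p
  simp only [Nat.testBit_xor, Nat.testBit_and]
  cases q.testBit p <;> cases j.testBit p <;> rfl

lemma X2 (q j : ℕ) : (q ^^^ (q &&& j)) &&& q = q ^^^ (q &&& j) := by
  rw [and_eq_left_iff]
  intro p
  simp only [Nat.testBit_xor, Nat.testBit_and]
  cases q.testBit p <;> cases j.testBit p <;> rfl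

lemma X5 (u v : ℕ) : u &&& (u ||| v) = u := by
  rw [and_eq_left_iff]
  intro p
  simp only [Nat.testBit_or]
  cases u.testBit p <;> cases v.testBit p <;> rfl

lemma X10 (a b : ℕ) : a ^^^ b = (a ||| b) ^^^ (a &&& b) := by
  apply Nat.eq_of_testBit_eq
  intro p
  simp only [Nat.testBit_xor, Nat.testBit_or, Nat.testBit_and]
  cases a.testBit p <;> cases b.testBit p <;> rfl

private lemma boolX7 : ∀ ap bp jp : Bool, (jp && ap) = jp → (jp && bp) = jp →
    ((ap ^^ jp) || (bp ^^ jp)) = ((ap || bp) ^^ jp) := by decide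

lemma X7 {a b j : ℕ} (ha : j &&& a = j) (hb : j &&& b = j) :
    (a ^^^ j) ||| (b ^^^ j) = (a ||| b) ^^^ j := by
  have hpa := and_eq_left_iff.mp ha
  have hpb := and_eq_left_iff.mp hb
  apply Nat.eq_of_testBit_eq
  intro p
  simp only [Nat.testBit_xor, Nat.testBit_or]
  exact boolX7 _ _ _ (hpa p) (hpb p)

private lemma boolX8 : ∀ ap bp jp : Bool, (jp && ap) = jp →
    (jp && (ap || bp)) = jp := by decide

lemma X8 {a j : ℕ} (ha : j &&& a = j) (b : ℕ) : j &&& (a ||| b) = j := by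
  have hpa := and_eq_left_iff.mp ha
  rw [and_eq_left_iff]
  intro p
  simp only [Nat.testBit_or]
  exact boolX8 _ _ _ (hpa p)

private lemma boolX9 : ∀ ap bp jp : Bool,
    ((jp && (ap && bp)) = jp) ↔ ((jp && ap) = jp ∧ (jp && bp) = jp) := by decide

lemma X9 {a b j : ℕ} : j &&& (a &&& b) = j ↔ (j &&& a = j ∧ j &&& b = j) := by
  simp only [and_eq_left_iff, Nat.testBit_and, ← forall_and]
  exact forall_congr' fun p => boolX9 _ _ _

private lemma boolM5 : ∀ np jp kp ip lp : Bool,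
    ((kp && np) = kp ∧ (jp && kp) = false ∧ (ip && kp) = ip ∧ (lp && kp) = lp) ↔
      (((ip || lp) && kp) = (ip || lp) ∧ (kp && (np ^^ (np && jp))) = kp) := by decide

/-- Condition merging for the `k`-sum. -/
lemma M5 {n j k i l : ℕ} :
    (k &&& n = k ∧ j &&& k = 0 ∧ i &&& k = i ∧ l &&& k = l) ↔
      ((i ||| l) &&& k = i ||| l ∧ k &&& (n ^^^ (n &&& j)) = k) := by
  simp only [and_eq_left_iff, and_eq_zero_iff', Nat.testBit_or, Nat.testBit_xor,
    Nat.testBit_and, ← forall_and]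
  exact forall_congr' fun p => boolM5 _ _ _ _ _

end BitIdentities

section EQV

lemma X11 (u v j : ℕ) : (u ||| j) ||| (v ||| j) = (u ||| v) ||| j := by
  apply Nat.eq_of_testBit_eq
  intro p
  simp only [Nat.testBit_or]
  cases u.testBit p <;> cases v.testBit p <;> cases j.testBit p <;> rfl

/-- Backward computation: under condition `D`, `T_j = (a|||b) ^^^ j` and `C(j)` holds. -/
lemma Dback {a b j m : ℕ} (hjm : j ≤ m) (hA : j &&& a = j) (hB : j &&& b = j)
    (hle : a ||| b ≤ m) (ht : (m - (a ||| b)) &&& j = m - (a ||| b)) :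
    (m - j) ^^^ ((m - j) &&& j) = (a ||| b) ^^^ j ∧
      (a - j) ||| (b - j) = (m - j) ^^^ ((m - j) &&& j) := by
  set t₀ := m - (a ||| b) with htdef
  set x := (a ||| b) ^^^ j with hxdef
  have hjab : j &&& (a ||| b) = j := X8 hA b
  have hax : (a ||| b) - j = x := sub_eq_xor_of_submask hjab
  have hxj : x &&& j = 0 := xor_and_self_right hjab
  have hjle : j ≤ a ||| b := submask_le hjab
  have hxt : x &&& t₀ = 0 := by
    conv_lhs => rw [← ht]
    rw [Nat.land_comm t₀ j, ← Nat.land_assoc, hxj, Nat.zero_and]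
  have hq : m - j = x + t₀ := by omega
  have hqx : m - j = x ^^^ t₀ := by
    rw [hq, add_eq_xor_of_and_eq_zero _ _ hxt]
  have hqj : (m - j) &&& j = t₀ := by
    rw [hqx, Nat.and_xor_distrib_right, hxj, ht, Nat.zero_xor]
  have hT : (m - j) ^^^ ((m - j) &&& j) = x := by
    rw [hqj, hqx, Nat.xor_xor_cancel_right]
  refine ⟨hT, ?_⟩
  rw [hT, sub_eq_xor_of_submask hA, sub_eq_xor_of_submask hB, X7 hA hB, hxdef]

/-- The central equivalence for the `j`-sum. -/
lemma EQV {a b j m : ℕ} (hja : j ≤ a) (hjb : j ≤ b) (hjm : j ≤ m) :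
    (a - j) ||| (b - j) = (m - j) ^^^ ((m - j) &&& j) ↔
      (j &&& a = j ∧ j &&& b = j ∧ a ||| b ≤ m ∧
        (m - (a ||| b)) &&& j = m - (a ||| b)) := by
  constructor
  · intro H
    set q := m - j with hqdef
    set T := q ^^^ (q &&& j) with hTdef
    set u := a - j with hudef
    set v := b - j with hvdef
    have hTj : T &&& j = 0 := X1 q j
    have huT : u &&& T = u := by rw [← H]; exact X5 u v
    have hvT : v &&& T = v := by rw [← H, Nat.lor_comm]; exact X5 v u
    have huj : u &&& j = 0 := by
      rw [← huT, Nat.land_assoc, hTj, Nat.and_zero]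
    have hvj : v &&& j = 0 := by
      rw [← hvT, Nat.land_assoc, hTj, Nat.and_zero]
    have hau : a = u ^^^ j := by
      rw [← add_eq_xor_of_and_eq_zero _ _ huj]; omega
    have hbv : b = v ^^^ j := by
      rw [← add_eq_xor_of_and_eq_zero _ _ hvj]; omega
    have hA : j &&& a = j := by
      rw [hau, Nat.and_xor_distrib_left, Nat.land_comm j u, huj, Nat.and_self,
        Nat.zero_xor]
    have hB : j &&& b = j := by
      rw [hbv, Nat.and_xor_distrib_left, Nat.land_comm j v, hvj, Nat.and_self,
        Nat.zero_xor]
    -- compute a ||| b = T + j  and m = T + (q &&& j) + j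
    set w := q &&& j with hwdef
    have hTw : T &&& w = 0 := by
      rw [hwdef, Nat.land_comm q j, ← Nat.land_assoc, hTj, Nat.zero_and]
    have hTxorw : T ^^^ w = q := by
      rw [hTdef, Nat.xor_xor_cancel_right]
    have hTaddw : T + w = q := by
      rw [add_eq_xor_of_and_eq_zero _ _ hTw, hTxorw]
    have hmq : m = T + w + j := by omega
    have haor : a ||| b = T + j := by
      have h1 : a = u ||| j := by
        rw [hau, or_eq_xor_of_and_eq_zero huj]
      have h2 : b = v ||| j := by
        rw [hbv, or_eq_xor_of_and_eq_zero hvj]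
      rw [h1, h2, X11, H, ← add_eq_or_of_and_eq_zero hTj]
    have hle : a ||| b ≤ m := by omega
    have ht0 : m - (a ||| b) = w := by omega
    have hwj : w &&& j = w := by
      rw [hwdef, Nat.land_assoc, Nat.and_self]
    exact ⟨hA, hB, hle, by rw [ht0]; exact hwj⟩
  · rintro ⟨hA, hB, hle, ht⟩
    exact (Dback hjm hA hB hle ht).2

end EQV

section SumMachinery

open Finset

variable {R : Type*} [CommRing R]

lemma stepA (F : ℕ → R) (j k : ℕ) :
    (∑ i ∈ range (k + 1), if (k - i) &&& i = 0 then sgn R (k - i) * F (j + i) else 0)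
      = sgn R k * ∑ i ∈ range (k + 1), (if i &&& k = i then sgn R i * F (j + i) else 0) := by
  rw [Finset.mul_sum]
  apply Finset.sum_congr rfl
  intro i hi
  have hik : i ≤ k := Nat.lt_succ_iff.mp (Finset.mem_range.mp hi)
  by_cases hc : i &&& k = i
  · rw [if_pos ((sub_and_eq_zero_iff hik).mpr hc), if_pos hc, sgn_sub_submask hc]
    ring
  · rw [if_neg (fun h => hc ((sub_and_eq_zero_iff hik).mp h)), if_neg hc, mul_zero]

lemma extSum (h : ℕ → R) {k n : ℕ} (hk : k ≤ n) :
    (∑ i ∈ range (k + 1), if i &&& k = i then h i else 0)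
      = ∑ i ∈ range (n + 1), if i &&& k = i then h i else 0 := by
  apply Finset.sum_subset
  · exact Finset.range_subset_range.mpr (Nat.succ_le_succ hk)
  · intro i _ hi
    rw [if_neg]
    intro hc
    have : i ≤ k := submask_le hc
    exact hi (Finset.mem_range.mpr (Nat.lt_succ_of_le this))

private lemma scalar1 (c1 c2 sk A B : R) (h : sk * sk = 1) :
    c1 * sk * c2 * (sk * A) * (sk * B) = c1 * c2 * sk * (A * B) := by
  linear_combination (c1 * c2 * sk * A * B) * h

private lemma ifmul {p1 p2 p3 p4 q : Prop} [Decidable p1] [Decidable p2] [Decidable p3]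
    [Decidable p4] [Decidable q] (h : (p1 ∧ p2 ∧ p3 ∧ p4) ↔ q) (sk r s : R) :
    (if p1 then (1 : R) else 0) * (if p2 then (1 : R) else 0) * sk *
      ((if p3 then r else 0) * (if p4 then s else 0))
      = (if q then sk else 0) * r * s := by
  by_cases h1 : p1 <;> by_cases h2 : p2 <;> by_cases h3 : p3 <;> by_cases h4 : p4 <;>
    simp_all <;> ring

lemma stepK (F G : ℕ → R) (j n k : ℕ) (hk : k ≤ n) :
    (if (n - k) &&& k = 0 then (1 : R) else 0) * sgn R k * (if j &&& k = 0 then (1 : R) else 0) *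
      (∑ i ∈ range (k + 1), if (k - i) &&& i = 0 then sgn R (k - i) * F (j + i) else 0) *
      (∑ l ∈ range (k + 1), if (k - l) &&& l = 0 then sgn R (k - l) * G (j + l) else 0)
    = ∑ i ∈ range (n + 1), ∑ l ∈ range (n + 1),
        (if ((i ||| l) &&& k = i ||| l ∧ k &&& (n ^^^ (n &&& j)) = k) then sgn R k else 0) *
          (sgn R i * F (j + i)) * (sgn R l * G (j + l)) := by
  rw [stepA F j k, stepA G j k, extSum _ hk, extSum _ hk]
  set A := ∑ i ∈ range (n + 1), (if i &&& k = i then sgn R i * F (j + i) else 0) with hA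
  set B := ∑ l ∈ range (n + 1), (if l &&& k = l then sgn R l * G (j + l) else 0) with hB
  have step1 : (if (n - k) &&& k = 0 then (1 : R) else 0) * sgn R k *
      (if j &&& k = 0 then (1 : R) else 0) * (sgn R k * A) * (sgn R k * B)
      = (if (n - k) &&& k = 0 then (1 : R) else 0) * (if j &&& k = 0 then (1 : R) else 0) *
          sgn R k * (A * B) := by
    have := scalar1 (if (n - k) &&& k = 0 then (1 : R) else 0)
      (if j &&& k = 0 then (1 : R) else 0) (sgn R k) A B (sgn_sq k)
    exact this
  rw [step1, hA, hB, Finset.sum_mul_sum, Finset.mul_sum]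
  apply Finset.sum_congr rfl
  intro i _
  rw [Finset.mul_sum]
  apply Finset.sum_congr rfl
  intro l _
  exact ifmul ((and_congr (sub_and_eq_zero_iff hk) Iff.rfl).trans M5) (sgn R k) _ _

end SumMachinery

section StepJ

open Finset

variable {R : Type*} [CommRing R]

lemma stepJ (F G : ℕ → R) (j n : ℕ) :
    (∑ k ∈ range (n + 1),
      (if (n - k) &&& k = 0 then (1 : R) else 0) * sgn R k *
        (if j &&& k = 0 then (1 : R) else 0) *
        (∑ i ∈ range (k + 1), if (k - i) &&& i = 0 then sgn R (k - i) * F (j + i) else 0) *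
        (∑ l ∈ range (k + 1), if (k - l) &&& l = 0 then sgn R (k - l) * G (j + l) else 0))
    = ∑ i ∈ range (n + 1), ∑ l ∈ range (n + 1),
        (if i ||| l = n ^^^ (n &&& j) then sgn R (n ^^^ (n &&& j)) else 0) *
          (sgn R i * F (j + i)) * (sgn R l * G (j + l)) := by
  have h1 : (∑ k ∈ range (n + 1),
      (if (n - k) &&& k = 0 then (1 : R) else 0) * sgn R k *
        (if j &&& k = 0 then (1 : R) else 0) *
        (∑ i ∈ range (k + 1), if (k - i) &&& i = 0 then sgn R (k - i) * F (j + i) else 0) *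
        (∑ l ∈ range (k + 1), if (k - l) &&& l = 0 then sgn R (k - l) * G (j + l) else 0))
      = ∑ k ∈ range (n + 1), ∑ i ∈ range (n + 1), ∑ l ∈ range (n + 1),
          (if ((i ||| l) &&& k = i ||| l ∧ k &&& (n ^^^ (n &&& j)) = k) then sgn R k else 0) *
            (sgn R i * F (j + i)) * (sgn R l * G (j + l)) := by
    apply Finset.sum_congr rfl
    intro k hkmem
    exact stepK F G j n k (Nat.lt_succ_iff.mp (Finset.mem_range.mp hkmem))
  rw [h1, Finset.sum_comm]
  apply Finset.sum_congr rfl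
  intro i _
  rw [Finset.sum_comm]
  apply Finset.sum_congr rfl
  intro l _
  have hTn : n ^^^ (n &&& j) ≤ n := submask_le (X2 n j)
  calc ∑ k ∈ range (n + 1),
        (if ((i ||| l) &&& k = i ||| l ∧ k &&& (n ^^^ (n &&& j)) = k) then sgn R k else 0) *
          (sgn R i * F (j + i)) * (sgn R l * G (j + l))
      = (∑ k ∈ range (n + 1),
          (if ((i ||| l) &&& k = i ||| l ∧ k &&& (n ^^^ (n &&& j)) = k) then sgn R k else 0)) *
          ((sgn R i * F (j + i)) * (sgn R l * G (j + l))) := by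
        rw [Finset.sum_mul]
        apply Finset.sum_congr rfl
        intro k _
        ring
    _ = (if i ||| l = n ^^^ (n &&& j) then sgn R (n ^^^ (n &&& j)) else 0) *
          (sgn R i * F (j + i)) * (sgn R l * G (j + l)) := by
        rw [altsum n (i ||| l) (n ^^^ (n &&& j)) hTn]
        ring

end StepJ

section ShiftSum

open Finset

variable {R : Type*} [CommRing R]

lemma shift_sum (h : ℕ → R) {j m : ℕ} (hj : j ≤ m) :
    (∑ i ∈ range (m - j + 1), h (j + i))
      = ∑ a ∈ range (m + 1), if j ≤ a then h a else 0 := by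
  rw [← Finset.sum_filter]
  have hfil : Finset.filter (fun a => j ≤ a) (range (m + 1)) = Finset.Ico j (m + 1) := by
    ext x
    simp only [Finset.mem_filter, Finset.mem_range, Finset.mem_Ico]
    omega
  rw [hfil, Finset.sum_Ico_eq_sum_range]
  have : m + 1 - j = m - j + 1 := by omega
  rw [this]

end ShiftSum

section FIN

open Finset

variable {R : Type*} [CommRing R]

lemma FIN (a b m : ℕ) (ha : a ≤ m) (hb : b ≤ m) (r s : R) :
    (∑ j ∈ range (m + 1),
      if j ≤ a then
        (if j ≤ b then
          (if (a - j) ||| (b - j) = (m - j) ^^^ ((m - j) &&& j)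
            then sgn R ((m - j) ^^^ ((m - j) &&& j)) else 0) *
            (sgn R (a - j) * r) * (sgn R (b - j) * s)
        else 0)
      else 0)
    = (if a + b = m then (1 : R) else 0) * (r * s) := by
  have hpoint : ∀ j ∈ range (m + 1),
      (if j ≤ a then
        (if j ≤ b then
          (if (a - j) ||| (b - j) = (m - j) ^^^ ((m - j) &&& j)
            then sgn R ((m - j) ^^^ ((m - j) &&& j)) else 0) *
            (sgn R (a - j) * r) * (sgn R (b - j) * s)
        else 0)
      else 0)
      = (if a ||| b ≤ m then
          (sgn R a * sgn R b * sgn R (a ||| b)) *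
            (if ((m - (a ||| b)) &&& j = m - (a ||| b) ∧ j &&& (a &&& b) = j)
              then sgn R j else 0)
        else 0) * (r * s) := by
    intro j hjmem
    have hjm : j ≤ m := Nat.lt_succ_iff.mp (Finset.mem_range.mp hjmem)
    by_cases hab : j ≤ a ∧ j ≤ b
    · obtain ⟨hja, hjb⟩ := hab
      rw [if_pos hja, if_pos hjb]
      by_cases hC : (a - j) ||| (b - j) = (m - j) ^^^ ((m - j) &&& j)
      · obtain ⟨hA, hB, hle, ht⟩ := (EQV hja hjb hjm).mp hC
        have hT := (Dback hjm hA hB hle ht).1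
        rw [if_pos hC, hT, if_pos hle,
          if_pos ⟨ht, X9.mpr ⟨hA, hB⟩⟩,
          sub_eq_xor_of_submask hA, sub_eq_xor_of_submask hB,
          sgn_xor (a ||| b) j, sgn_xor a j, sgn_xor b j]
        linear_combination (sgn R (a ||| b) * sgn R a * sgn R b * r * s * sgn R j) *
          (sgn_sq (R := R) j)
      · rw [if_neg hC]
        have hzero : (if a ||| b ≤ m then
            (sgn R a * sgn R b * sgn R (a ||| b)) *
              (if ((m - (a ||| b)) &&& j = m - (a ||| b) ∧ j &&& (a &&& b) = j)
                then sgn R j else 0)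
          else 0) = 0 := by
          by_cases hle : a ||| b ≤ m
          · rw [if_pos hle, if_neg, mul_zero]
            rintro ⟨ht, hj'⟩
            obtain ⟨hA, hB⟩ := X9.mp hj'
            exact hC ((EQV hja hjb hjm).mpr ⟨hA, hB, hle, ht⟩)
          · rw [if_neg hle]
        rw [hzero]
        ring
    · have h0 : (if j ≤ a then
          (if j ≤ b then
            (if (a - j) ||| (b - j) = (m - j) ^^^ ((m - j) &&& j)
              then sgn R ((m - j) ^^^ ((m - j) &&& j)) else 0) *
              (sgn R (a - j) * r) * (sgn R (b - j) * s)
          else 0)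
        else 0) = 0 := by
        by_cases hja : j ≤ a
        · rw [if_pos hja, if_neg (fun hjb => hab ⟨hja, hjb⟩)]
        · rw [if_neg hja]
      rw [h0]
      have hcondfalse : ¬((m - (a ||| b)) &&& j = m - (a ||| b) ∧ j &&& (a &&& b) = j) := by
        rintro ⟨_, hj'⟩
        have hjab : j ≤ a &&& b := submask_le hj'
        exact hab ⟨le_trans hjab Nat.and_le_left, le_trans hjab Nat.and_le_right⟩
      by_cases hle : a ||| b ≤ m
      · rw [if_pos hle, if_neg hcondfalse, mul_zero, zero_mul]
      · rw [if_neg hle, zero_mul]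
  rw [Finset.sum_congr rfl hpoint]
  by_cases hle : a ||| b ≤ m
  · simp only [if_pos hle]
    rw [← Finset.sum_mul, ← Finset.mul_sum,
      altsum m (m - (a ||| b)) (a &&& b) (le_trans Nat.and_le_left ha)]
    have ID := add_eq_or_add_and a b
    by_cases hm : a + b = m
    · have ht0 : m - (a ||| b) = a &&& b := by omega
      rw [if_pos ht0, if_pos hm]
      have hAB : sgn R a * sgn R b = sgn R (a ||| b) * sgn R (a &&& b) := by
        rw [← sgn_xor, ← sgn_xor, ← X10]
      have hO := sgn_sq (R := R) (a ||| b)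
      have hN := sgn_sq (R := R) (a &&& b)
      linear_combination (r * s) * ((sgn R (a ||| b) * sgn R (a &&& b)) * hAB +
        (sgn R (a &&& b) * sgn R (a &&& b)) * hO + hN)
    · have ht0 : m - (a ||| b) ≠ a &&& b := by omega
      rw [if_neg ht0, if_neg hm]
      ring
  · have hm : a + b ≠ m := by
      have ID := add_eq_or_add_and a b
      omega
    simp only [if_neg hle, if_neg hm]
    simp

end FIN

section Main

open Finset

variable {R : Type*} [CommRing R]

lemma main_sum (F G : ℕ → R) (m : ℕ) :
    (∑ j ∈ range (m + 1), ∑ k ∈ range (m - j + 1),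
      (if (m - j - k) &&& k = 0 then (1 : R) else 0) * sgn R k *
        (if j &&& k = 0 then (1 : R) else 0) *
        (∑ i ∈ range (k + 1), if (k - i) &&& i = 0 then sgn R (k - i) * F (j + i) else 0) *
        (∑ l ∈ range (k + 1), if (k - l) &&& l = 0 then sgn R (k - l) * G (j + l) else 0))
    = ∑ a ∈ range (m + 1), F a * G (m - a) := by
  have h1 : ∀ j ∈ range (m + 1),
      (∑ k ∈ range (m - j + 1),
        (if (m - j - k) &&& k = 0 then (1 : R) else 0) * sgn R k *
          (if j &&& k = 0 then (1 : R) else 0) *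
          (∑ i ∈ range (k + 1), if (k - i) &&& i = 0 then sgn R (k - i) * F (j + i) else 0) *
          (∑ l ∈ range (k + 1), if (k - l) &&& l = 0 then sgn R (k - l) * G (j + l) else 0))
      = ∑ a ∈ range (m + 1), if j ≤ a then
          (∑ b ∈ range (m + 1), if j ≤ b then
            (if (a - j) ||| (b - j) = (m - j) ^^^ ((m - j) &&& j)
              then sgn R ((m - j) ^^^ ((m - j) &&& j)) else 0) *
              (sgn R (a - j) * F a) * (sgn R (b - j) * G b)
          else 0)
        else 0 := by
    intro j hjmem
    have hjm : j ≤ m := Nat.lt_succ_iff.mp (Finset.mem_range.mp hjmem)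
    rw [stepJ F G j (m - j)]
    rw [← shift_sum (fun a => ∑ b ∈ range (m + 1), if j ≤ b then
        (if (a - j) ||| (b - j) = (m - j) ^^^ ((m - j) &&& j)
          then sgn R ((m - j) ^^^ ((m - j) &&& j)) else 0) *
          (sgn R (a - j) * F a) * (sgn R (b - j) * G b)
      else 0) hjm]
    apply Finset.sum_congr rfl
    intro i _
    rw [← shift_sum (fun b =>
        (if ((j + i) - j) ||| (b - j) = (m - j) ^^^ ((m - j) &&& j)
          then sgn R ((m - j) ^^^ ((m - j) &&& j)) else 0) *
          (sgn R ((j + i) - j) * F (j + i)) * (sgn R (b - j) * G b)) hjm]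
    simp only [Nat.add_sub_cancel_left]
  rw [Finset.sum_congr rfl h1, Finset.sum_comm]
  have h2 : ∀ a ∈ range (m + 1),
      (∑ j ∈ range (m + 1), if j ≤ a then
        (∑ b ∈ range (m + 1), if j ≤ b then
          (if (a - j) ||| (b - j) = (m - j) ^^^ ((m - j) &&& j)
            then sgn R ((m - j) ^^^ ((m - j) &&& j)) else 0) *
            (sgn R (a - j) * F a) * (sgn R (b - j) * G b)
        else 0)
      else 0)
      = F a * G (m - a) := by
    intro a hamem
    have ham : a ≤ m := Nat.lt_succ_iff.mp (Finset.mem_range.mp hamem)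
    have hswap : (∑ j ∈ range (m + 1), if j ≤ a then
        (∑ b ∈ range (m + 1), if j ≤ b then
          (if (a - j) ||| (b - j) = (m - j) ^^^ ((m - j) &&& j)
            then sgn R ((m - j) ^^^ ((m - j) &&& j)) else 0) *
            (sgn R (a - j) * F a) * (sgn R (b - j) * G b)
        else 0)
      else 0)
        = ∑ b ∈ range (m + 1), ∑ j ∈ range (m + 1), if j ≤ a then
            (if j ≤ b then
              (if (a - j) ||| (b - j) = (m - j) ^^^ ((m - j) &&& j)
                then sgn R ((m - j) ^^^ ((m - j) &&& j)) else 0) *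
                (sgn R (a - j) * F a) * (sgn R (b - j) * G b)
            else 0)
          else 0 := by
      rw [Finset.sum_comm]
      apply Finset.sum_congr rfl
      intro j _
      by_cases hja : j ≤ a
      · simp only [if_pos hja]
      · simp only [if_neg hja, Finset.sum_const_zero]
    rw [hswap]
    have hfin : ∀ b ∈ range (m + 1),
        (∑ j ∈ range (m + 1), if j ≤ a then
          (if j ≤ b then
            (if (a - j) ||| (b - j) = (m - j) ^^^ ((m - j) &&& j)
              then sgn R ((m - j) ^^^ ((m - j) &&& j)) else 0) *
              (sgn R (a - j) * F a) * (sgn R (b - j) * G b)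
          else 0)
        else 0)
        = (if a + b = m then (1 : R) else 0) * (F a * G b) := by
      intro b hbmem
      exact FIN a b m ham (Nat.lt_succ_iff.mp (Finset.mem_range.mp hbmem)) (F a) (G b)
    rw [Finset.sum_congr rfl hfin]
    rw [Finset.sum_eq_single (m - a)]
    · rw [if_pos (by omega), one_mul]
    · intro b _ hbne
      rw [if_neg (by omega), zero_mul]
    · intro hmem
      exact absurd (Finset.mem_range.mpr (by omega)) hmem
  rw [Finset.sum_congr rfl h2]

end Main


/-- For power series f, g and every m,
(f * g)[m] = Σ_{j=0}^{m} Σ_{k=0}^{m-j} T(m-j,k) * σ k * δ j [k] * f_j*[k] * g_j*[k],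
where T(n,k) = 1 if (n-k) AND k = 0 and 0 otherwise, and δ j [k] = 1 if j AND k = 0
and 0 otherwise. -/
theorem convolution_double_sum (R : Type*) [CommRing R] (f g : PowerSeries R) (m : ℕ) :
    PowerSeries.coeff m (f * g) =
      ∑ j ∈ Finset.range (m + 1), ∑ k ∈ Finset.range (m - j + 1),
        (if (m - j - k) &&& k = 0 then (1 : R) else 0) * sgn R k *
          (if j &&& k = 0 then (1 : R) else 0) *
          PowerSeries.coeff k (bmtInv (shiftS j f)) *
          PowerSeries.coeff k (bmtInv (shiftS j g)) := by
  have hcoeff : ∀ (h : PowerSeries R) (j k : ℕ),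
      PowerSeries.coeff k (bmtInv (shiftS j h))
        = ∑ i ∈ Finset.range (k + 1),
            if (k - i) &&& i = 0 then sgn R (k - i) * PowerSeries.coeff (j + i) h else 0 := by
    intro h j k
    simp [bmtInv, shiftS, PowerSeries.coeff_mk]
  simp only [hcoeff]
  rw [PowerSeries.coeff_mul, Finset.Nat.sum_antidiagonal_eq_sum_range_succ_mk]
  exact (main_sum (fun a => PowerSeries.coeff a f) (fun b => PowerSeries.coeff b g) m).symm
end

section
/- Let n be a power of 2, let g be a formal power series over a commutative ring R, and let m ∈ ℕ satisfy m mod 2n ≥ n. Then the coefficient of x^m in (1 + x^n)·(g*) equals the coefficient of x^{m−n} in (g_n)*, where g_n is the series g shifted by n and * denotes the inverse binomial modulo 2 transform. -/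
/- ### Auxiliary bitwise lemmas -/

lemma aux_and_eq_zero_iff (a b : ℕ) :
    a &&& b = 0 ↔ ∀ i, a.testBit i = false ∨ b.testBit i = false := by
  constructor
  · intro h i
    by_cases h1 : a.testBit i = true
    · right
      have := congrArg (fun x => Nat.testBit x i) h
      simpa [Nat.testBit_and, h1, Nat.zero_testBit] using this
    · left; simpa using h1
  · intro h
    apply Nat.eq_of_testBit_eq
    intro i
    rcases h i with h' | h' <;> simp [Nat.testBit_and, h', Nat.zero_testBit]

lemma aux_and_or_zero_iff (x a b : ℕ) :
    x &&& (a ||| b) = 0 ↔ (x &&& a = 0 ∧ x &&& b = 0) := by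
  simp only [aux_and_eq_zero_iff, Nat.testBit_or, Bool.or_eq_false_iff]
  constructor
  · intro h
    exact ⟨fun i => by have := h i; tauto, fun i => by have := h i; tauto⟩
  · rintro ⟨h1, h2⟩ i
    have := h1 i; have := h2 i; tauto

lemma aux_add_eq_or : ∀ a b : ℕ, a &&& b = 0 → a + b = a ||| b := by
  intro a
  induction a using Nat.strong_induction_on with
  | _ a ih =>
    intro b h
    rcases Nat.eq_zero_or_pos a with rfl | ha
    · simp
    · have hb := (aux_and_eq_zero_iff a b).1 h
      have hd : (a / 2) &&& (b / 2) = 0 := by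
        rw [aux_and_eq_zero_iff]
        intro i
        simpa [Nat.testBit_div_two] using hb (i + 1)
      have h0 : a % 2 = 0 ∨ b % 2 = 0 := by
        rcases hb 0 with h' | h' <;> rw [Nat.testBit_eq_decide_div_mod_eq] at h' <;>
          simp at h' <;> omega
      have hih : a / 2 + b / 2 = a / 2 ||| b / 2 :=
        ih (a / 2) (by omega) (b / 2) hd
      have hor2 : (a ||| b) / 2 = a / 2 ||| b / 2 := by
        apply Nat.eq_of_testBit_eq
        intro i
        simp [Nat.testBit_div_two, Nat.testBit_or]
      have hor0 : (a ||| b) % 2 = a % 2 + b % 2 := by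
        have h1 : (a ||| b).testBit 0 = (a.testBit 0 || b.testBit 0) := Nat.testBit_or a b 0
        simp only [Nat.testBit_eq_decide_div_mod_eq, Nat.pow_zero, Nat.div_one] at h1
        have e1 := Nat.mod_two_eq_zero_or_one a
        have e2 := Nat.mod_two_eq_zero_or_one b
        have e3 := Nat.mod_two_eq_zero_or_one (a ||| b)
        rcases e3 with h3 | h3 <;> rw [h3] <;> simp [h3] at h1 <;> omega
      omega

lemma aux_testBit_false_of_disj {t k : ℕ} (h : 2 ^ t &&& k = 0) : k.testBit t = false := by
  cases hb : k.testBit t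
  · rfl
  · exfalso
    rw [Nat.and_comm, Nat.and_two_pow, hb] at h
    simp at h

lemma aux_and_two_pow_of_testBit {t k : ℕ} (h : k.testBit t = true) : 2 ^ t &&& k = 2 ^ t := by
  rw [Nat.and_comm, Nat.and_two_pow, h]
  simp

lemma aux_split_bit {t k : ℕ} (h : k.testBit t = true) :
    2 ^ t &&& (k - 2 ^ t) = 0 ∧ 2 ^ t + (k - 2 ^ t) = k := by
  set k' := k ^^^ 2 ^ t with hk'
  have hdisj : 2 ^ t &&& k' = 0 := by
    rw [aux_and_eq_zero_iff]
    intro i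
    by_cases hit : t = i
    · subst hit
      right
      simp [hk', Nat.testBit_xor, h, Nat.testBit_two_pow]
    · left
      simp [Nat.testBit_two_pow, hit]
  have hor : 2 ^ t ||| k' = k := by
    apply Nat.eq_of_testBit_eq
    intro i
    by_cases hit : t = i
    · subst hit
      simp [Nat.testBit_or, Nat.testBit_two_pow, h]
    · simp [Nat.testBit_or, Nat.testBit_two_pow, hit, hk', Nat.testBit_xor]
  have hadd : 2 ^ t + k' = k := by rw [aux_add_eq_or _ _ hdisj, hor]
  have : k - 2 ^ t = k' := by omega
  rw [this]
  exact ⟨hdisj, hadd⟩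

lemma aux_digits_sum_expand (x : ℕ) :
    (Nat.digits 2 x).sum = x % 2 + (Nat.digits 2 (x / 2)).sum := by
  rcases Nat.eq_zero_or_pos x with rfl | hx
  · simp
  · rw [Nat.digits_def' (by norm_num : (1:ℕ) < 2) hx]
    simp

lemma aux_digits_sum_add : ∀ a b : ℕ, a &&& b = 0 →
    (Nat.digits 2 (a + b)).sum = (Nat.digits 2 a).sum + (Nat.digits 2 b).sum := by
  intro a
  induction a using Nat.strong_induction_on with
  | _ a ih =>
    intro b h
    rcases Nat.eq_zero_or_pos a with rfl | ha
    · simp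
    · have hb := (aux_and_eq_zero_iff a b).1 h
      have hd : (a / 2) &&& (b / 2) = 0 := by
        rw [aux_and_eq_zero_iff]
        intro i
        simpa [Nat.testBit_div_two] using hb (i + 1)
      have h0 : a % 2 = 0 ∨ b % 2 = 0 := by
        rcases hb 0 with h' | h' <;> rw [Nat.testBit_eq_decide_div_mod_eq] at h' <;>
          simp at h' <;> omega
      have hmod : (a + b) % 2 = a % 2 + b % 2 := by omega
      have hdiv : (a + b) / 2 = a / 2 + b / 2 := by omega
      rw [aux_digits_sum_expand (a + b), aux_digits_sum_expand a, aux_digits_sum_expand b,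
        hmod, hdiv, ih (a / 2) (by omega) (b / 2) hd]
      omega

lemma aux_sgn_disj_add {R : Type*} [CommRing R] {a b : ℕ} (h : a &&& b = 0) :
    sgn R (a + b) = sgn R a * sgn R b := by
  unfold sgn
  rw [aux_digits_sum_add a b h, pow_add]

lemma aux_sgn_two_pow (R : Type*) [CommRing R] (t : ℕ) : sgn R (2 ^ t) = -1 := by
  have h : (Nat.digits 2 (2 ^ t)).sum = 1 := by
    induction t with
    | zero => simp
    | succ t ihh =>
      rw [aux_digits_sum_expand]
      have h1 : 2 ^ (t + 1) % 2 = 0 := by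
        simp [pow_succ, Nat.mul_mod_left]
      have h2 : 2 ^ (t + 1) / 2 = 2 ^ t := by
        rw [pow_succ, Nat.mul_div_cancel _ (by norm_num)]
      rw [h1, h2, ihh]
  unfold sgn
  rw [h, pow_one]

/-- Let n be a power of 2, g a power series and m with m mod 2n ≥ n. Then
the coefficient of x^m in (1 + x^n) * g* equals the coefficient of x^(m-n) in (g_n)*. -/
theorem bmtInv_shift_coeff (R : Type*) [CommRing R] (n : ℕ) (hn : ∃ t : ℕ, n = 2 ^ t)
    (g : PowerSeries R) (m : ℕ) (hm : n ≤ m % (2 * n)) :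
    PowerSeries.coeff m ((1 + PowerSeries.X ^ n) * bmtInv g) =
      PowerSeries.coeff (m - n) (bmtInv (shiftS n g)) := by
  obtain ⟨t, rfl⟩ := hn
  have hn0 : 0 < 2 ^ t := Nat.pow_pos (by norm_num)
  have hnm : 2 ^ t ≤ m := le_trans hm (Nat.mod_le _ _)
  -- bit t of m is set
  have htm : m.testBit t = true := by
    have h1 : m % (2 ^ t * 2) / 2 ^ t = m / 2 ^ t % 2 := Nat.mod_mul_right_div_self m (2 ^ t) 2
    have h2 : m % (2 ^ t * 2) < 2 ^ t * 2 := Nat.mod_lt _ (by omega)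
    have h3 : 2 ^ t ≤ m % (2 ^ t * 2) := by rwa [mul_comm] at hm
    have h4 : m % (2 ^ t * 2) / 2 ^ t = 1 := by
      have l1 : 1 ≤ m % (2 ^ t * 2) / 2 ^ t := (Nat.one_le_div_iff hn0).mpr h3
      have l2 : m % (2 ^ t * 2) / 2 ^ t < 2 := Nat.div_lt_of_lt_mul (by omega)
      omega
    rw [Nat.testBit_eq_decide_div_mod_eq, ← h1, h4]
    rfl
  obtain ⟨hm_disj, hm_eq⟩ := aux_split_bit htm
  -- rewrite the LHS coefficient
  rw [add_mul, one_mul, map_add]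
  have hx : (PowerSeries.coeff m) (PowerSeries.X ^ 2 ^ t * bmtInv g)
      = PowerSeries.coeff (m - 2 ^ t) (bmtInv g) := by
    have : m = (m - 2 ^ t) + 2 ^ t := by omega
    conv_lhs => rw [this]
    rw [PowerSeries.coeff_X_pow_mul]
  rw [hx]
  simp only [bmtInv, shiftS, PowerSeries.coeff_mk]
  -- abbreviations
  set S1 := ∑ k ∈ Finset.range (m + 1),
    (if (m - k) &&& k = 0 then sgn R (m - k) * (PowerSeries.coeff k) g else 0) with hS1
  set S2 := ∑ k ∈ Finset.range (m - 2 ^ t + 1),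
    (if (m - 2 ^ t - k) &&& k = 0 then sgn R (m - 2 ^ t - k) * (PowerSeries.coeff k) g else 0) with hS2
  set T := ∑ k ∈ Finset.range (m - 2 ^ t + 1),
    (if (m - 2 ^ t - k) &&& k = 0 then sgn R (m - 2 ^ t - k) *
      (PowerSeries.coeff (2 ^ t + k)) g else 0) with hT
  -- split S1 according to bit t of k
  have hsplit : S1 =
      (∑ k ∈ Finset.range (m + 1), (if k.testBit t = true ∧ (m - k) &&& k = 0 then
        sgn R (m - k) * (PowerSeries.coeff k) g else 0)) +
      (∑ k ∈ Finset.range (m + 1), (if k.testBit t = false ∧ (m - k) &&& k = 0 then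
        sgn R (m - k) * (PowerSeries.coeff k) g else 0)) := by
    rw [hS1, ← Finset.sum_add_distrib]
    apply Finset.sum_congr rfl
    intro k _
    by_cases h1 : (m - k) &&& k = 0 <;> cases hb : k.testBit t <;> simp [h1, hb]
  -- Part A equals T
  have claimA : (∑ k ∈ Finset.range (m + 1), (if k.testBit t = true ∧ (m - k) &&& k = 0 then
      sgn R (m - k) * (PowerSeries.coeff k) g else 0)) = T := by
    rw [hT, ← Finset.sum_filter, ← Finset.sum_filter]
    apply Finset.sum_nbij' (i := fun k => k - 2 ^ t) (j := fun k => 2 ^ t + k)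
    · intro k hk
      simp only [Finset.mem_filter, Finset.mem_range] at hk ⊢
      obtain ⟨hkm, hbt, hdis⟩ := hk
      obtain ⟨hk_disj, hk_eq⟩ := aux_split_bit hbt
      refine ⟨by omega, ?_⟩
      have e1 : m - 2 ^ t - (k - 2 ^ t) = m - k := by omega
      rw [e1]
      -- (m-k) &&& (k-2 ^ t) = 0 since k - 2 ^ t is a submask of k
      have hor : k = 2 ^ t ||| (k - 2 ^ t) := by rw [← aux_add_eq_or _ _ hk_disj, hk_eq]
      have := (aux_and_or_zero_iff (m - k) (2 ^ t) (k - 2 ^ t)).1 (by rw [← hor]; exact hdis)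
      exact this.2
    · intro k hk
      simp only [Finset.mem_filter, Finset.mem_range] at hk ⊢
      obtain ⟨hkm, hdis⟩ := hk
      have hsum : (m - 2 ^ t - k) + k = m - 2 ^ t := by omega
      have hor : (m - 2 ^ t - k) ||| k = m - 2 ^ t := by rw [← aux_add_eq_or _ _ hdis]; omega
      have hdisj2 : 2 ^ t &&& ((m - 2 ^ t - k) ||| k) = 0 := by rw [hor]; exact hm_disj
      obtain ⟨hda, hdk⟩ := (aux_and_or_zero_iff (2 ^ t) (m - 2 ^ t - k) k).1 hdisj2
      constructor
      · omega
      constructor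
      · -- testBit t (2 ^ t + k) = true
        have : 2 ^ t + k = 2 ^ t ||| k := aux_add_eq_or _ _ hdk
        rw [this, Nat.testBit_or, Nat.testBit_two_pow]
        simp
      · -- (m - (2 ^ t + k)) &&& (2 ^ t + k) = 0
        have e1 : m - (2 ^ t + k) = m - 2 ^ t - k := by omega
        rw [e1, aux_add_eq_or _ _ hdk, aux_and_or_zero_iff]
        refine ⟨by rwa [Nat.and_comm], hdis⟩
    · intro k hk
      simp only [Finset.mem_filter, Finset.mem_range] at hk
      obtain ⟨hkm, hbt, _⟩ := hk
      have hnk : 2 ^ t ≤ k := by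
        have := Nat.and_le_right (n := 2 ^ t) (m := k)
        rw [aux_and_two_pow_of_testBit hbt] at this
        exact this
      omega
    · intro k hk
      omega
    · intro k hk
      simp only [Finset.mem_filter, Finset.mem_range] at hk
      obtain ⟨hkm, hbt, _⟩ := hk
      have hnk : 2 ^ t ≤ k := by
        have := Nat.and_le_right (n := 2 ^ t) (m := k)
        rw [aux_and_two_pow_of_testBit hbt] at this
        exact this
      have e1 : m - 2 ^ t - (k - 2 ^ t) = m - k := by omega
      have e2 : 2 ^ t + (k - 2 ^ t) = k := by omega
      rw [e1, e2]
  -- Part B equals -S2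
  have claimB : (∑ k ∈ Finset.range (m + 1), (if k.testBit t = false ∧ (m - k) &&& k = 0 then
      sgn R (m - k) * (PowerSeries.coeff k) g else 0)) = -S2 := by
    have hsub : (∑ k ∈ Finset.range (m + 1), (if k.testBit t = false ∧ (m - k) &&& k = 0 then
        sgn R (m - k) * (PowerSeries.coeff k) g else 0)) =
        ∑ k ∈ Finset.range (m - 2 ^ t + 1), (if k.testBit t = false ∧ (m - k) &&& k = 0 then
        sgn R (m - k) * (PowerSeries.coeff k) g else 0) := by
      symm
      apply Finset.sum_subset
      · apply Finset.range_subset_range.2; omega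
      · intro k hk hnk
        simp only [Finset.mem_range] at hk hnk
        rw [if_neg]
        rintro ⟨hbt, hdis⟩
        -- then m - k has bit t, so m - k ≥ 2 ^ t, so k ≤ m - 2 ^ t, contradiction
        have hsum : (m - k) + k = m := by omega
        have hor : (m - k) ||| k = m := by rw [← aux_add_eq_or _ _ hdis]; omega
        have hmk : (m - k).testBit t = true := by
          have := congrArg (fun x => Nat.testBit x t) hor
          simp only [Nat.testBit_or] at this
          rw [hbt, htm] at this
          simpa using this
        have : 2 ^ t ≤ m - k := by
          have h2 := Nat.and_le_right (n := 2 ^ t) (m := m - k)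
          rw [aux_and_two_pow_of_testBit hmk] at h2
          exact h2
        omega
    rw [hsub, hS2, ← Finset.sum_neg_distrib]
    apply Finset.sum_congr rfl
    intro k hk
    simp only [Finset.mem_range] at hk
    by_cases hc : (m - 2 ^ t - k) &&& k = 0
    · -- both guards hold
      have hsum : (m - 2 ^ t - k) + k = m - 2 ^ t := by omega
      have hor : (m - 2 ^ t - k) ||| k = m - 2 ^ t := by rw [← aux_add_eq_or _ _ hc]; omega
      have hdisj2 : 2 ^ t &&& ((m - 2 ^ t - k) ||| k) = 0 := by rw [hor]; exact hm_disj
      obtain ⟨hda, hdk⟩ := (aux_and_or_zero_iff (2 ^ t) (m - 2 ^ t - k) k).1 hdisj2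
      have hbt : k.testBit t = false := aux_testBit_false_of_disj hdk
      have e1 : m - k = 2 ^ t + (m - 2 ^ t - k) := by omega
      have hdis : (m - k) &&& k = 0 := by
        rw [e1, aux_add_eq_or _ _ hda, Nat.and_comm, aux_and_or_zero_iff]
        exact ⟨by rw [Nat.and_comm]; exact hdk, by rw [Nat.and_comm]; exact hc⟩
      rw [if_pos ⟨hbt, hdis⟩, if_pos hc, e1, aux_sgn_disj_add hda, aux_sgn_two_pow]
      ring
    · -- both guards fail
      rw [if_neg hc, if_neg, neg_zero]
      rintro ⟨hbt, hdis⟩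
      apply hc
      have hsum : (m - k) + k = m := by omega
      have hor : (m - k) ||| k = m := by rw [← aux_add_eq_or _ _ hdis]; omega
      have hmk : (m - k).testBit t = true := by
        have := congrArg (fun x => Nat.testBit x t) hor
        simp only [Nat.testBit_or] at this
        rw [hbt, htm] at this
        simpa using this
      obtain ⟨hd2, he2⟩ := aux_split_bit hmk
      have e3 : m - k - 2 ^ t = m - 2 ^ t - k := by
        have : 2 ^ t ≤ m - k := by
          have h2 := Nat.and_le_right (n := 2 ^ t) (m := m - k)
          rw [aux_and_two_pow_of_testBit hmk] at h2
          exact h2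
        omega
      -- (m - k - 2 ^ t) is a submask of (m - k), so disjoint from k
      have horr : m - k = 2 ^ t ||| (m - k - 2 ^ t) := by
        rw [← aux_add_eq_or _ _ hd2]; omega
      have := (aux_and_or_zero_iff k (2 ^ t) (m - k - 2 ^ t)).1
        (by rw [← horr, Nat.and_comm]; exact hdis)
      rw [← e3, Nat.and_comm]
      exact this.2
  rw [hsplit, claimA, claimB]
  abel
end

section
/- For every k ∈ ℕ and every formal power series f over a commutative ring R, the identity (δ_k ⊙ (f_k)*) · x^k = (δ_k · x^k) ⊙ (f* · S_k) holds, where f_k is the series f shifted by k, * denotes the inverse binomial modulo 2 transform (and f* = (f_0)*), and S_k is the k-th Sierpiński polynomial. -/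
/-- The Sierpiński polynomial `S m = ∏_{j≥0} (1 + X^(2^j))^(d_j m)` where `d_j m` is the
`j`-th binary digit of `m`. -/
noncomputable def Sier (R : Type*) [CommRing R] (m : ℕ) : Polynomial R :=
  ∏ j ∈ Finset.range (m + 1), if m.testBit j then 1 + Polynomial.X ^ (2 ^ j) else 1

/-- `δ k`: the power series whose `m`-th coefficient is `1` if `m AND k = 0`, else `0`. -/
noncomputable def delta (R : Type*) [CommRing R] (k : ℕ) : PowerSeries R :=
  PowerSeries.mk fun m => if m &&& k = 0 then 1 else 0

/-- Termwise (Hadamard) product of power series. -/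
noncomputable def hadS {R : Type*} [CommRing R] (f g : PowerSeries R) : PowerSeries R :=
  PowerSeries.mk fun n => PowerSeries.coeff n f * PowerSeries.coeff n g

namespace DHaux

open Finset PowerSeries

def bS (n : ℕ) : Finset ℕ := n.bitIndices.toFinset

def mk' (s : Finset ℕ) : ℕ := ∑ i ∈ s, 2 ^ i

lemma mk'_bS (n : ℕ) : mk' (bS n) = n := Finset.twoPowSum_toFinset_bitIndices n

lemma bS_mk' (s : Finset ℕ) : bS (mk' s) = s := Finset.toFinset_bitIndices_twoPowSum s

lemma mem_bitIndices (n : ℕ) : ∀ i : ℕ, i ∈ n.bitIndices ↔ n.testBit i := by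
  induction n using Nat.binaryRec with
  | zero => simp
  | bit b n ih =>
    intro i
    cases b with
    | false =>
      rw [Nat.bit_false, Nat.bitIndices_two_mul]
      cases i with
      | zero => simp [Nat.testBit_zero, Nat.mul_mod_right]
      | succ i =>
        rw [Nat.testBit_succ, Nat.mul_div_cancel_left _ (by norm_num : 0 < 2), ← ih i]
        simp [List.mem_map]
    | true =>
      rw [Nat.bit_true, Nat.bitIndices_two_mul_add_one]
      cases i with
      | zero => simp [Nat.testBit_zero, Nat.mul_add_mod]
      | succ i =>
        rw [Nat.testBit_succ]
        rw [show (2 * n + 1) / 2 = n by omega, ← ih i]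
        simp [List.mem_map]

lemma mem_bS {i n : ℕ} : i ∈ bS n ↔ n.testBit i := by
  rw [bS, List.mem_toFinset, mem_bitIndices]

lemma land_eq_zero_iff {a b : ℕ} : a &&& b = 0 ↔ Disjoint (bS a) (bS b) := by
  rw [Finset.disjoint_left]
  constructor
  · intro h i hia hib
    have := congrArg (fun x => Nat.testBit x i) h
    simp [Nat.testBit_land, mem_bS.1 hia, mem_bS.1 hib] at this
  · intro h
    apply Nat.eq_of_testBit_eq
    intro i
    simp only [Nat.testBit_land, Nat.zero_testBit, Bool.and_eq_false_iff]
    by_cases ha : a.testBit i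
    · exact Or.inr (by simpa [mem_bS] using h (mem_bS.2 ha))
    · exact Or.inl (by simpa using ha)

lemma mk'_union {s t : Finset ℕ} (h : Disjoint s t) : mk' (s ∪ t) = mk' s + mk' t :=
  Finset.sum_union h

lemma mk'_mono {s t : Finset ℕ} (h : s ⊆ t) : mk' s ≤ mk' t :=
  Finset.sum_le_sum_of_subset h

lemma sub_mk' {s : Finset ℕ} {n : ℕ} (h : s ⊆ bS n) : n - mk' s = mk' (bS n \ s) := by
  have h2 : mk' (bS n \ s) + mk' s = n := by
    rw [← mk'_union (Finset.sdiff_disjoint), Finset.sdiff_union_of_subset h, mk'_bS]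
  omega

lemma cond_iff {j m : ℕ} (hj : j ≤ m) : (m - j) &&& j = 0 ↔ bS j ⊆ bS m := by
  constructor
  · intro h
    have hd := land_eq_zero_iff.1 h
    have hm : m = mk' (bS (m - j) ∪ bS j) := by
      rw [mk'_union hd, mk'_bS, mk'_bS]; omega
    have hb : bS m = bS (m - j) ∪ bS j := by
      conv_lhs => rw [hm]
      rw [bS_mk']
    rw [hb]
    exact Finset.subset_union_right
  · intro h
    have h2 := sub_mk' h
    rw [mk'_bS] at h2
    rw [h2, land_eq_zero_iff, bS_mk']
    exact Finset.sdiff_disjoint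

lemma mk'_le_of_subset_bS {s : Finset ℕ} {n : ℕ} (h : s ⊆ bS n) : mk' s ≤ n := by
  have := mk'_mono h; rwa [mk'_bS] at this

lemma card_bS (n : ℕ) : (bS n).card = n.bitIndices.length :=
  List.toFinset_card_of_nodup (Nat.bitIndices_sorted.nodup)

lemma digits_sum_eq (n : ℕ) : (Nat.digits 2 n).sum = (bS n).card := by
  induction n using Nat.binaryRec with
  | zero => simp [bS]
  | bit b n ih =>
    cases b with
    | false =>
      rw [Nat.bit_false]
      rcases Nat.eq_zero_or_pos n with rfl | hn
      · simp [bS]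
      · rw [Nat.digits_def' (show (1:ℕ) < 2 by norm_num) (show 0 < 2 * n by omega),
          Nat.mul_mod_right, Nat.mul_div_cancel_left _ (show 0 < 2 by norm_num)]
        rw [card_bS, Nat.bitIndices_two_mul, List.length_map]
        simpa [card_bS] using ih
    | true =>
      rw [Nat.bit_true]
      rw [Nat.digits_def' (show (1:ℕ) < 2 by norm_num) (show 0 < 2 * n + 1 by omega),
        show (2 * n + 1) % 2 = 1 by omega, show (2 * n + 1) / 2 = n by omega]
      rw [card_bS, Nat.bitIndices_two_mul_add_one, List.length_cons, List.length_map]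
      simp only [List.sum_cons]
      rw [ih, card_bS]
      omega

variable {R : Type*} [CommRing R]

lemma sgn_mk' (s : Finset ℕ) : sgn R (mk' s) = (-1 : R) ^ s.card := by
  rw [sgn, digits_sum_eq, bS_mk']

/-- Reindex a sum over numbers with bits inside `e` by the powerset of `e`. -/
lemma sum_powerset_reindex {M : Type*} [AddCommMonoid M] {N : ℕ} {e : Finset ℕ}
    (h : mk' e ≤ N) (g : ℕ → M) :
    ∑ b ∈ Finset.range (N + 1), (if bS b ⊆ e then g b else 0)
      = ∑ t ∈ e.powerset, g (mk' t) := by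
  rw [← Finset.sum_filter]
  refine Finset.sum_bij' (fun b _ => bS b) (fun t _ => mk' t) ?_ ?_ ?_ ?_ ?_
  · intro b hb
    simp only [Finset.mem_filter] at hb
    exact Finset.mem_powerset.2 hb.2
  · intro t ht
    simp only [Finset.mem_powerset] at ht
    simp only [Finset.mem_filter, Finset.mem_range, bS_mk']
    exact ⟨by have := (mk'_mono ht).trans h; omega, ht⟩
  · intro b _; exact mk'_bS b
  · intro t _; exact bS_mk' t
  · intro b _; rw [mk'_bS]

lemma sum_neg_one_pow (K : Finset ℕ) :
    ∑ t ∈ K.powerset, (-1 : R) ^ t.card = if K = ∅ then 1 else 0 := by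
  have := Finset.sum_powerset_neg_one_pow_card (x := K)
  have h2 := congrArg (Int.cast : ℤ → R) this
  push_cast at h2
  split_ifs with h <;> simp [h] at h2 ⊢ <;> exact h2

/-- Key cancellation: summing over pairs `v ⊆ u ⊆ K` leaves only `u = v = K`. -/
lemma key_cancel (K : Finset ℕ) (h : ℕ → R) :
    ∑ u ∈ K.powerset, ∑ v ∈ u.powerset, (-1 : R) ^ (u \ v).card * h (mk' v)
      = h (mk' K) := by
  have hiff : ∀ u v : Finset ℕ, u ∈ K.powerset ∧ v ∈ u.powerset ↔
      u ∈ K.powerset.filter (fun u => v ⊆ u) ∧ v ∈ K.powerset := by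
    intro u v
    simp only [Finset.mem_powerset, Finset.mem_filter]
    constructor
    · rintro ⟨h1, h2⟩; exact ⟨⟨h1, h2⟩, h2.trans h1⟩
    · rintro ⟨⟨h1, h2⟩, _⟩; exact ⟨h1, h2⟩
  rw [Finset.sum_comm' (s := K.powerset) (t := fun u => u.powerset) (t' := K.powerset)
    (s' := fun v => K.powerset.filter (fun u => v ⊆ u)) hiff
    (f := fun u v => (-1 : R) ^ (u \ v).card * h (mk' v))]
  have step : ∀ v ∈ K.powerset,
      ∑ u ∈ K.powerset.filter (fun u => v ⊆ u), (-1 : R) ^ (u \ v).card * h (mk' v)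
        = (if v = K then 1 else 0) * h (mk' v) := by
    intro v hv
    rw [Finset.mem_powerset] at hv
    have : ∑ u ∈ K.powerset.filter (fun u => v ⊆ u), (-1 : R) ^ (u \ v).card
        = ∑ d ∈ (K \ v).powerset, (-1 : R) ^ d.card := by
      refine Finset.sum_bij' (fun u _ => u \ v) (fun d _ => v ∪ d) ?_ ?_ ?_ ?_ ?_
      · intro u hu
        simp only [Finset.mem_filter, Finset.mem_powerset] at hu ⊢
        exact Finset.sdiff_subset_sdiff hu.1 le_rfl
      · intro d hd
        simp only [Finset.mem_powerset] at hd
        refine Finset.mem_filter.2 ⟨Finset.mem_powerset.2 ?_, Finset.subset_union_left⟩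
        exact Finset.union_subset hv (hd.trans Finset.sdiff_subset)
      · intro u hu
        simp only [Finset.mem_filter] at hu
        exact Finset.union_sdiff_of_subset hu.2
      · intro d hd
        simp only [Finset.mem_powerset] at hd
        show (v ∪ d) \ v = d
        rw [Finset.union_sdiff_cancel_left]
        exact Finset.disjoint_of_subset_right hd Finset.sdiff_disjoint.symm
      · intro u _; rfl
    rw [← Finset.sum_mul, this, sum_neg_one_pow]
    congr 1
    simp only [Finset.sdiff_eq_empty_iff_subset]
    by_cases hvK : v = K
    · simp [hvK]
    · rw [if_neg (fun hKv => hvK (Finset.Subset.antisymm hv hKv)), if_neg hvK]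
  rw [Finset.sum_congr rfl step]
  simp only [ite_mul, one_mul, zero_mul]
  rw [Finset.sum_ite_eq' K.powerset K (fun v => h (mk' v))]
  rw [if_pos (Finset.mem_powerset_self K)]

lemma union_sdiff_union {A B s1 s2 : Finset ℕ} (hAB : Disjoint A B) (h1 : s1 ⊆ A)
    (h2 : s2 ⊆ B) : (A ∪ B) \ (s1 ∪ s2) = (A \ s1) ∪ (B \ s2) := by
  ext x
  simp only [Finset.mem_sdiff, Finset.mem_union]
  have h1x : x ∈ s1 → x ∈ A := @h1 x
  have h2x : x ∈ s2 → x ∈ B := @h2 x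
  have h3 : x ∈ A → x ∉ B := fun h => Finset.disjoint_left.1 hAB h
  tauto

lemma sum_powerset_union {M : Type*} [AddCommMonoid M] {A B : Finset ℕ} (hAB : Disjoint A B)
    (G : Finset ℕ → M) :
    ∑ s ∈ (A ∪ B).powerset, G s = ∑ u ∈ A.powerset, ∑ v ∈ B.powerset, G (u ∪ v) := by
  rw [← Finset.sum_product']
  refine Finset.sum_bij' (fun s _ => (s ∩ A, s ∩ B)) (fun p _ => p.1 ∪ p.2) ?_ ?_ ?_ ?_ ?_
  · intro s hs
    simp only [Finset.mem_product, Finset.mem_powerset]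
    exact ⟨Finset.inter_subset_right, Finset.inter_subset_right⟩
  · intro p hp
    simp only [Finset.mem_product, Finset.mem_powerset] at hp
    simp only [Finset.mem_powerset]
    exact Finset.union_subset (hp.1.trans Finset.subset_union_left)
      (hp.2.trans Finset.subset_union_right)
  · intro s hs
    simp only [Finset.mem_powerset] at hs
    show s ∩ A ∪ s ∩ B = s
    rw [← Finset.inter_union_distrib_left]
    exact Finset.inter_eq_left.2 hs
  · intro p hp
    simp only [Finset.mem_product, Finset.mem_powerset] at hp
    show ((p.1 ∪ p.2) ∩ A, (p.1 ∪ p.2) ∩ B) = p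
    have h3 : ∀ x, x ∈ A → x ∉ B := fun x hx => Finset.disjoint_left.1 hAB hx
    have e1 : (p.1 ∪ p.2) ∩ A = p.1 := by
      ext x
      simp only [Finset.mem_inter, Finset.mem_union]
      have hx1 : x ∈ p.1 → x ∈ A := fun hq => hp.1 hq
      have hx2 : x ∈ p.2 → x ∈ B := fun hq => hp.2 hq
      have hx3 := h3 x
      tauto
    have e2 : (p.1 ∪ p.2) ∩ B = p.2 := by
      ext x
      simp only [Finset.mem_inter, Finset.mem_union]
      have hx1 : x ∈ p.1 → x ∈ A := fun hq => hp.1 hq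
      have hx2 : x ∈ p.2 → x ∈ B := fun hq => hp.2 hq
      have hx3 := h3 x
      tauto
    rw [e1, e2]
  · intro s hs
    simp only [Finset.mem_powerset] at hs
    show G s = G (s ∩ A ∪ s ∩ B)
    rw [← Finset.inter_union_distrib_left, Finset.inter_eq_left.2 hs]

lemma coeff_bmtInv (f : PowerSeries R) (n : ℕ) :
    PowerSeries.coeff n (bmtInv f)
      = ∑ s ∈ (bS n).powerset, (-1 : R) ^ ((bS n \ s).card) * PowerSeries.coeff (mk' s) f := by
  rw [bmtInv, PowerSeries.coeff_mk]
  have hc : ∑ j ∈ Finset.range (n + 1),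
        (if (n - j) &&& j = 0 then sgn R (n - j) * PowerSeries.coeff j f else 0)
      = ∑ j ∈ Finset.range (n + 1),
        (if bS j ⊆ bS n then sgn R (n - j) * PowerSeries.coeff j f else 0) :=
    Finset.sum_congr rfl (fun j hj =>
      if_congr (cond_iff (Nat.lt_succ_iff.1 (Finset.mem_range.1 hj))) rfl rfl)
  rw [hc]
  rw [sum_powerset_reindex (by rw [mk'_bS]) (fun j => sgn R (n - j) * PowerSeries.coeff j f)]
  refine Finset.sum_congr rfl fun s hs => ?_
  rw [sub_mk' (Finset.mem_powerset.1 hs), sgn_mk']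

lemma Sier_eq_sum (k : ℕ) :
    Sier R k = ∑ t ∈ (bS k).powerset, Polynomial.X ^ (mk' t) := by
  have hset : (Finset.range (k + 1)).filter (fun j => k.testBit j) = bS k := by
    ext j
    simp only [Finset.mem_filter, Finset.mem_range, mem_bS]
    constructor
    · rintro ⟨_, h⟩; exact h
    · intro h
      refine ⟨?_, h⟩
      have h2 : 2 ^ j ≤ k := Nat.two_pow_le_of_mem_bitIndices ((mem_bitIndices k j).2 h)
      have h3 : j < 2 ^ j := Nat.lt_two_pow_self
      omega
  rw [Sier, ← Finset.prod_filter, hset]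
  rw [Finset.prod_congr rfl (fun j _ => add_comm 1 (Polynomial.X ^ (2 ^ j) : Polynomial R))]
  rw [Finset.prod_add]
  refine Finset.sum_congr rfl fun t _ => ?_
  rw [Finset.prod_const_one, mul_one, Finset.prod_pow_eq_pow_sum]
  rfl

lemma coeff_Sier (k b : ℕ) :
    (Sier R k).coeff b = if bS b ⊆ bS k then (1 : R) else 0 := by
  rw [Sier_eq_sum, Polynomial.finset_sum_coeff]
  simp only [Polynomial.coeff_X_pow]
  have hc : ∑ t ∈ (bS k).powerset, (if b = mk' t then (1 : R) else 0)
      = ∑ t ∈ (bS k).powerset, (if t = bS b then (1 : R) else 0) :=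
    Finset.sum_congr rfl (fun t _ => if_congr
      ⟨fun h => by rw [h, bS_mk'], fun h => by rw [h, mk'_bS]⟩ rfl rfl)
  rw [hc]
  rw [Finset.sum_ite_eq' ((bS k).powerset) (bS b) (fun _ => (1 : R))]
  simp [Finset.mem_powerset]

lemma key (f : PowerSeries R) (k m : ℕ) (hmk : m &&& k = 0) :
    PowerSeries.coeff m (bmtInv (shiftS k f))
      = PowerSeries.coeff (k + m) (bmtInv f * (Sier R k : PowerSeries R)) := by
  have hD : Disjoint (bS m) (bS k) := land_eq_zero_iff.1 hmk
  have hL : PowerSeries.coeff m (bmtInv (shiftS k f))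
      = ∑ s1 ∈ (bS m).powerset,
          (-1 : R) ^ ((bS m \ s1).card) * PowerSeries.coeff (k + mk' s1) f := by
    rw [coeff_bmtInv]
    exact Finset.sum_congr rfl fun s hs => by rw [shiftS, PowerSeries.coeff_mk]
  rw [hL, mul_comm (bmtInv f), PowerSeries.coeff_mul,
    Finset.Nat.sum_antidiagonal_eq_sum_range_succ_mk]
  have hstep1 : ∀ i ∈ Finset.range (k + m + 1),
      PowerSeries.coeff i ((Sier R k : Polynomial R) : PowerSeries R)
          * PowerSeries.coeff (k + m - i) (bmtInv f)
        = if bS i ⊆ bS k then PowerSeries.coeff (k + m - i) (bmtInv f) else 0 := by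
    intro i _
    rw [Polynomial.coeff_coe, coeff_Sier]
    split_ifs <;> simp
  rw [Finset.sum_congr rfl hstep1,
    sum_powerset_reindex (e := bS k) (by rw [mk'_bS]; omega)
      (fun i => PowerSeries.coeff (k + m - i) (bmtInv f))]
  -- reindex t ↦ bS k \ t
  have hstep2 : ∑ t ∈ (bS k).powerset, PowerSeries.coeff (k + m - mk' t) (bmtInv f)
      = ∑ u ∈ (bS k).powerset, PowerSeries.coeff (mk' (bS m ∪ u)) (bmtInv f) := by
    refine Finset.sum_bij' (fun t _ => bS k \ t) (fun u _ => bS k \ u) ?_ ?_ ?_ ?_ ?_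
    · intro t _
      simp only [Finset.mem_powerset]
      exact Finset.sdiff_subset
    · intro u _
      simp only [Finset.mem_powerset]
      exact Finset.sdiff_subset
    · intro t ht
      show bS k \ (bS k \ t) = t
      exact Finset.sdiff_sdiff_eq_self (Finset.mem_powerset.1 ht)
    · intro u hu
      show bS k \ (bS k \ u) = u
      exact Finset.sdiff_sdiff_eq_self (Finset.mem_powerset.1 hu)
    · intro t ht
      have ht' := Finset.mem_powerset.1 ht
      have h1 : mk' t ≤ k := mk'_le_of_subset_bS ht'
      have h2 := sub_mk' ht'
      have hdisj : Disjoint (bS m) (bS k \ t) := hD.mono_right Finset.sdiff_subset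
      have : k + m - mk' t = mk' (bS m ∪ (bS k \ t)) := by
        rw [mk'_union hdisj, mk'_bS, ← h2]
        omega
      rw [this]
  rw [hstep2]
  have hstep3 : ∀ u ∈ (bS k).powerset,
      PowerSeries.coeff (mk' (bS m ∪ u)) (bmtInv f)
        = ∑ s1 ∈ (bS m).powerset, ∑ s2 ∈ u.powerset,
            (-1 : R) ^ ((bS m \ s1).card)
              * ((-1 : R) ^ ((u \ s2).card) * PowerSeries.coeff (mk' s1 + mk' s2) f) := by
    intro u hu
    have hu' := Finset.mem_powerset.1 hu
    have hMu : Disjoint (bS m) u := hD.mono_right hu'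
    rw [coeff_bmtInv, bS_mk', sum_powerset_union hMu]
    refine Finset.sum_congr rfl fun s1 hs1 => Finset.sum_congr rfl fun s2 hs2 => ?_
    have hs1' := Finset.mem_powerset.1 hs1
    have hs2' := Finset.mem_powerset.1 hs2
    rw [union_sdiff_union hMu hs1' hs2',
      Finset.card_union_of_disjoint (hMu.mono Finset.sdiff_subset Finset.sdiff_subset),
      pow_add, mk'_union (hMu.mono hs1' hs2'), mul_assoc]
  rw [Finset.sum_congr rfl hstep3, Finset.sum_comm]
  refine Finset.sum_congr rfl fun s1 _ => ?_
  simp only [← Finset.mul_sum]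
  rw [key_cancel (bS k) (fun x => PowerSeries.coeff (mk' s1 + x) f), mk'_bS, add_comm (mk' s1)]

end DHaux

/-- For every k and power series f,
(δ k ⊙ (f_k)*) * x^k = (δ k * x^k) ⊙ (f* * S k). -/
theorem delta_had_bmtInv_shift (R : Type*) [CommRing R] (k : ℕ) (f : PowerSeries R) :
    hadS (delta R k) (bmtInv (shiftS k f)) * PowerSeries.X ^ k =
      hadS (delta R k * PowerSeries.X ^ k) (bmtInv f * (Sier R k : PowerSeries R)) := by
  ext n
  simp only [hadS, delta, PowerSeries.coeff_mk, PowerSeries.coeff_mul_X_pow']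
  by_cases hk : k ≤ n
  · rw [if_pos hk, if_pos hk]
    obtain ⟨m, rfl⟩ : ∃ m, n = k + m := ⟨n - k, by omega⟩
    rw [Nat.add_sub_cancel_left]
    by_cases hm : m &&& k = 0
    · rw [if_pos hm, one_mul, one_mul, DHaux.key f k m hm]
    · rw [if_neg hm, zero_mul, zero_mul]
  · rw [if_neg hk, if_neg hk, zero_mul]
end
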